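/- The dual quantum Gromov–Hausdorff distance satisfies the triangle inequality: for Lip-von Neumann algebras M₁, M₂, M₃, dist_{qGH*}(M₁, M₃) ≤ dist_{qGH*}(M₁, M₂) + dist_{qGH*}(M₂, M₃). -/

import Mathlib

open Filter Topology

/-- The topology induced by a (semi)norm-like function `L`: the topology generated by the
open balls of the translation-invariant (pseudo)metric `d(x,y) = L (x - y)`. -/
def ballTopology {E : Type*} [AddGroup E] (L : E → ℝ) : TopologicalSpace E :=
  TopologicalSpace.generateFrom {s | ∃ c r, s = {x | L (x - c) < r}}

/-- A dual-Lip-norm on (the underlying space of) a von Neumann algebra `M`: a norm making the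
unit ball of `M` compact in the induced topology (equivalently, inducing the weak* topology on
bounded subsets). -/
def IsDualLipNorm {M : Type*} [NormedRing M] [NormedAlgebra ℂ M] (L : M → ℝ) : Prop :=
  (∀ x, 0 ≤ L x) ∧ (∀ x y, L (x + y) ≤ L x + L y) ∧
    (∀ (c : ℂ) (x : M), L (c • x) = ‖c‖ * L x) ∧ (∀ x, L x = 0 → x = 0) ∧
    @IsCompact M (ballTopology L) {x | ‖x‖ ≤ 1}

/-- Positivity in a `*`-ring: `a` is positive iff it is of the form `b* b`. -/
def IsPos {A : Type*} [Ring A] [StarRing A] (a : A) : Prop := ∃ b, a = star b * b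

/-- The positive part `X_M` of the unit ball of the 2×2 matrices over `A`:
the elements `a` with `0 ≤ a ≤ 1`. -/
def posUnitBall (A : Type*) [Ring A] [StarRing A] : Set (Matrix (Fin 2) (Fin 2) A) :=
  {a | IsPos a ∧ IsPos (1 - a)}

/-- The unit ball of the 2×2 matrices over a unital C*-algebra `A`, characterized
algebraically: `‖a‖ ≤ 1` iff `1 - a* a ≥ 0`. -/
def matUnitBall (A : Type*) [Ring A] [StarRing A] : Set (Matrix (Fin 2) (Fin 2) A) :=
  {a | IsPos (1 - star a * a)}

/-- The lift of a (semi)norm to 2×2 matrices: the max over the entries. -/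
noncomputable def matLift {A : Type*} (L : A → ℝ) (a : Matrix (Fin 2) (Fin 2) A) : ℝ :=
  max (max (L (a 0 0)) (L (a 0 1))) (max (L (a 1 0)) (L (a 1 1)))

/-- The Hausdorff distance between two subsets w.r.t. a seminorm `L`. -/
noncomputable def seminormHausdorffDist {Z : Type*} [AddGroup Z] (L : Z → ℝ)
    (A B : Set Z) : ℝ :=
  max (⨆ x : A, ⨅ y : B, L ((x : Z) - (y : Z))) (⨆ y : B, ⨅ x : A, L ((x : Z) - (y : Z)))

/-- The set `𝓛(M,N)` of admissible seminorms on `M ⊕ N`, i.e. seminorms restricting to `LM` on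
`M ⊕ {0}` and to `LN` on `{0} ⊕ N`. -/
def admissible {M N : Type*} [Ring M] [Algebra ℂ M] [Ring N] [Algebra ℂ N]
    (LM : M → ℝ) (LN : N → ℝ) : Set (M × N → ℝ) :=
  {L | (∀ z, 0 ≤ L z) ∧ (∀ z w, L (z + w) ≤ L z + L w) ∧
    (∀ (c : ℂ) (z : M × N), L (c • z) = ‖c‖ * L z) ∧
    (∀ x : M, L (x, 0) = LM x) ∧ (∀ y : N, L (0, y) = LN y)}

/-- The entrywise embedding of `M₂(M)` into `M₂(M ⊕ N)`. -/
def embL {M N : Type*} [Zero N] (a : Matrix (Fin 2) (Fin 2) M) :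
    Matrix (Fin 2) (Fin 2) (M × N) := a.map fun x => (x, 0)

/-- The entrywise embedding of `M₂(N)` into `M₂(M ⊕ N)`. -/
def embR {M N : Type*} [Zero M] (b : Matrix (Fin 2) (Fin 2) N) :
    Matrix (Fin 2) (Fin 2) (M × N) := b.map fun y => ((0 : M), y)

/-- The dual quantum Gromov–Hausdorff distance between `(M, LM)` and `(N, LN)`: the infimum,
over admissible seminorms `L` on `M ⊕ N`, of the Hausdorff distance w.r.t. the lift of `L` to
2×2 matrices between the positive parts of the unit balls of `M₂(M)` and `M₂(N)`. -/
noncomputable def distqGH {M N : Type*} [NormedRing M] [NormedAlgebra ℂ M] [StarRing M]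
    [NormedRing N] [NormedAlgebra ℂ N] [StarRing N] (LM : M → ℝ) (LN : N → ℝ) : ℝ :=
  sInf {d | ∃ L ∈ admissible LM LN,
    d = seminormHausdorffDist (matLift L)
      (embL (N := N) '' posUnitBall M) (embR (M := M) '' posUnitBall N)}

/-- The radius of a Lip-von Neumann algebra: the sup of the Lip-norm over the unit ball. -/
noncomputable def lipRadius {M : Type*} [NormedRing M] (L : M → ℝ) : ℝ :=
  sSup {r | ∃ x : M, ‖x‖ ≤ 1 ∧ r = L x}


set_option linter.unusedSectionVars false

section Aux

/-! ### Auxiliary lemmas -/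

private lemma real_le_of_forall_pos_le_add {a b : ℝ} (h : ∀ ε : ℝ, 0 < ε → a ≤ b + ε) :
    a ≤ b := by
  by_contra hab
  push_neg at hab
  have := h ((a - b) / 2) (by linarith)
  linarith

lemma bdd_of_compact {E : Type*} [AddCommGroup E] [Module ℂ E] (L : E → ℝ)
    (hsub : ∀ x y, L (x + y) ≤ L x + L y) (hhom : ∀ (c : ℂ) (x : E), L (c • x) = ‖c‖ * L x)
    {s : Set E} (hc : @IsCompact E (ballTopology L) s) : ∃ C, ∀ x ∈ s, L x ≤ C := by
  have hL0 : L 0 = 0 := by simpa using hhom 0 0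
  have hnonneg : ∀ x, 0 ≤ L x := by
    intro x
    have h1 : L (-x) = L x := by
      have := hhom (-1) x; simpa using this
    have h2 := hsub x (-x)
    rw [add_neg_cancel, hL0, h1] at h2
    linarith
  letI : TopologicalSpace E := ballTopology L
  have hopen : ∀ c : E, IsOpen {x | L (x - c) < 1} := fun c =>
    TopologicalSpace.isOpen_generateFrom_of_mem ⟨c, 1, rfl⟩
  have hcover : s ⊆ ⋃ c : E, {x | L (x - c) < 1} := by
    intro x _
    exact Set.mem_iUnion.2 ⟨x, by simp [hL0]⟩
  obtain ⟨t, ht⟩ := hc.elim_finite_subcover _ hopen hcover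
  refine ⟨1 + ∑ c ∈ t, L c, fun x hx => ?_⟩
  obtain ⟨c, hct, hxc⟩ := Set.mem_iUnion₂.1 (ht hx)
  have hle : L x ≤ L (x - c) + L c := by
    have := hsub (x - c) c
    rwa [sub_add_cancel] at this
  have hsum : L c ≤ ∑ c' ∈ t, L c' := Finset.single_le_sum (fun c' _ => hnonneg c') hct
  have hxc' : L (x - c) < 1 := hxc
  linarith

lemma entry_norm_le {M : Type*} [NormedRing M] [NormedAlgebra ℂ M] [StarRing M] [CStarRing M]
    [StarModule ℂ M] [CompleteSpace M] {a : Matrix (Fin 2) (Fin 2) M}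
    (ha : a ∈ posUnitBall M) (i j : Fin 2) : ‖a i j‖ ≤ 2 := by
  letI : CStarAlgebra M :=
    { ‹NormedRing M›, ‹StarRing M›, ‹CStarRing M›, ‹NormedAlgebra ℂ M›, ‹StarModule ℂ M›,
      ‹CompleteSpace M› with }
  rcases subsingleton_or_nontrivial M with hS | hN
  · rw [Subsingleton.elim (a i j) 0, norm_zero]; norm_num
  letI := CStarAlgebra.spectralOrder M
  haveI := CStarAlgebra.spectralOrderedRing M
  obtain ⟨⟨b, hb⟩, ⟨c, hc⟩⟩ := ha
  have hentry : ∀ (x : Matrix (Fin 2) (Fin 2) M) (i j : Fin 2),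
      (star x * x) i j = star (x 0 i) * x 0 j + star (x 1 i) * x 1 j := by
    intro x i j
    simp [Matrix.mul_apply, Fin.sum_univ_two, Matrix.star_apply]
  have hsum : ∀ i : Fin 2, star (b 0 i) * b 0 i + star (b 1 i) * b 1 i
      + (star (c 0 i) * c 0 i + star (c 1 i) * c 1 i) = 1 := by
    intro i
    have h1 : a i i = star (b 0 i) * b 0 i + star (b 1 i) * b 1 i := by
      rw [hb]; exact hentry b i i
    have h2 : (1 : M) - a i i = star (c 0 i) * c 0 i + star (c 1 i) * c 1 i := by
      have h3 := congrArg (fun m : Matrix (Fin 2) (Fin 2) M => m i i) hc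
      simpa [Matrix.sub_apply, Matrix.one_apply, hentry c i i] using h3
    rw [← h1, ← h2]; abel
  have hb' : ∀ k i : Fin 2, ‖b k i‖ ≤ 1 := by
    intro k i
    have hle : star (b k i) * b k i ≤ 1 := by
      rw [← sub_nonneg, ← hsum i]
      fin_cases k
      · calc (0:M) ≤ star (b 1 i) * b 1 i + (star (c 0 i) * c 0 i + star (c 1 i) * c 1 i) := by
              exact add_nonneg (star_mul_self_nonneg _)
                (add_nonneg (star_mul_self_nonneg _) (star_mul_self_nonneg _))
          _ = star (b 0 i) * b 0 i + star (b 1 i) * b 1 i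
              + (star (c 0 i) * c 0 i + star (c 1 i) * c 1 i) - star (b 0 i) * b 0 i := by abel
      · calc (0:M) ≤ star (b 0 i) * b 0 i + (star (c 0 i) * c 0 i + star (c 1 i) * c 1 i) := by
              exact add_nonneg (star_mul_self_nonneg _)
                (add_nonneg (star_mul_self_nonneg _) (star_mul_self_nonneg _))
          _ = star (b 0 i) * b 0 i + star (b 1 i) * b 1 i
              + (star (c 0 i) * c 0 i + star (c 1 i) * c 1 i) - star (b 1 i) * b 1 i := by abel
    have hn := CStarAlgebra.norm_le_norm_of_nonneg_of_le (star_mul_self_nonneg _) hle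
    rw [CStarRing.norm_star_mul_self, CStarRing.norm_one] at hn
    nlinarith [norm_nonneg (b k i)]
  have hentry' : a i j = star (b 0 i) * b 0 j + star (b 1 i) * b 1 j := by
    rw [hb]; exact hentry b i j
  rw [hentry']
  calc ‖star (b 0 i) * b 0 j + star (b 1 i) * b 1 j‖
      ≤ ‖star (b 0 i) * b 0 j‖ + ‖star (b 1 i) * b 1 j‖ := norm_add_le _ _
    _ ≤ ‖star (b 0 i)‖ * ‖b 0 j‖ + ‖star (b 1 i)‖ * ‖b 1 j‖ := by
        gcongr <;> exact norm_mul_le _ _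
    _ ≤ 1 * 1 + 1 * 1 := by
        rw [norm_star, norm_star]
        gcongr <;> [exact hb' 0 i; exact hb' 0 j; exact hb' 1 i; exact hb' 1 j]
    _ = 2 := by norm_num

lemma zero_mem_posUnitBall (A : Type*) [Ring A] [StarRing A] :
    (0 : Matrix (Fin 2) (Fin 2) A) ∈ posUnitBall A := by
  constructor
  · exact ⟨0, by simp⟩
  · exact ⟨1, by simp⟩

/-- A dual-Lip-norm is bounded on entries of elements of the positive unit ball. -/
lemma dualLipNorm_entry_bound {M : Type*} [NormedRing M] [NormedAlgebra ℂ M] [StarRing M]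
    [CStarRing M] [StarModule ℂ M] [CompleteSpace M] {L : M → ℝ} (h : IsDualLipNorm L) :
    ∃ C, 0 ≤ C ∧ ∀ a ∈ posUnitBall M, ∀ i j, L (a i j) ≤ C := by
  obtain ⟨C, hC⟩ := bdd_of_compact L h.2.1 h.2.2.1 h.2.2.2.2
  have hC0 : 0 ≤ C := le_trans (h.1 0) (hC 0 (by simp))
  refine ⟨2 * C, by linarith, fun a ha i j => ?_⟩
  have hnorm : ‖a i j‖ ≤ 2 := entry_norm_le ha i j
  have h2 : ((2 : ℂ) • ((2⁻¹ : ℂ) • a i j)) = a i j := by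
    rw [smul_smul]; norm_num
  have hsmall : ‖(2⁻¹ : ℂ) • a i j‖ ≤ 1 := by
    rw [norm_smul]
    simp only [norm_inv]
    rw [show ‖(2:ℂ)‖ = 2 by simp]
    linarith
  calc L (a i j) = ‖(2 : ℂ)‖ * L ((2⁻¹ : ℂ) • a i j) := by
        conv_lhs => rw [← h2, h.2.2.1]
    _ ≤ 2 * C := by
        rw [show ‖(2:ℂ)‖ = 2 by simp]
        have := hC _ hsmall
        linarith

lemma adm_zero {M N : Type*} [Ring M] [Algebra ℂ M] [Ring N] [Algebra ℂ N]
    {LM : M → ℝ} {LN : N → ℝ} {L : M × N → ℝ} (h : L ∈ admissible LM LN) : L 0 = 0 := by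
  simpa using h.2.2.1 0 0

lemma adm_neg {M N : Type*} [Ring M] [Algebra ℂ M] [Ring N] [Algebra ℂ N]
    {LM : M → ℝ} {LN : N → ℝ} {L : M × N → ℝ} (h : L ∈ admissible LM LN) (z : M × N) :
    L (-z) = L z := by
  have := h.2.2.1 (-1) z
  simpa using this

lemma matLift_nonneg {A : Type*} {L : A → ℝ} (h : ∀ x, 0 ≤ L x)
    (x : Matrix (Fin 2) (Fin 2) A) : 0 ≤ matLift L x :=
  le_trans (h (x 0 0)) (le_trans (le_max_left _ _) (le_max_left _ _))

lemma le_matLift {A : Type*} (L : A → ℝ) (x : Matrix (Fin 2) (Fin 2) A) (i j : Fin 2) :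
    L (x i j) ≤ matLift L x := by
  fin_cases i <;> fin_cases j <;> simp only [matLift, Fin.zero_eta, Fin.mk_one] <;>
    [exact le_max_of_le_left (le_max_left _ _); exact le_max_of_le_left (le_max_right _ _);
     exact le_max_of_le_right (le_max_left _ _); exact le_max_of_le_right (le_max_right _ _)]

lemma matLift_le {A : Type*} {L : A → ℝ} {x : Matrix (Fin 2) (Fin 2) A} {r : ℝ}
    (h : ∀ i j, L (x i j) ≤ r) : matLift L x ≤ r :=
  max_le (max_le (h 0 0) (h 0 1)) (max_le (h 1 0) (h 1 1))

lemma embL_sub_embR_apply {M N : Type*} [AddGroup M] [AddGroup N]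
    (a : Matrix (Fin 2) (Fin 2) M) (b : Matrix (Fin 2) (Fin 2) N) (i j : Fin 2) :
    (embL (N := N) a - embR (M := M) b) i j = (a i j, -(b i j)) := by
  simp [embL, embR, Matrix.sub_apply, Matrix.map_apply, Prod.mk_sub_mk]

section Conv

variable {M₁ M₂ M₃ : Type*} [NormedRing M₁] [NormedAlgebra ℂ M₁]
  [NormedRing M₂] [NormedAlgebra ℂ M₂] [NormedRing M₃] [NormedAlgebra ℂ M₃]
  {L₁ : M₁ → ℝ} {L₂ : M₂ → ℝ} {L₃ : M₃ → ℝ}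
  {L₁₂ : M₁ × M₂ → ℝ} {L₂₃ : M₂ × M₃ → ℝ}

/-- The inf-convolution of two admissible seminorms. -/
noncomputable def conv (L₁₂ : M₁ × M₂ → ℝ) (L₂₃ : M₂ × M₃ → ℝ) : M₁ × M₃ → ℝ :=
  fun z => sInf {t | ∃ x₂ : M₂, t = L₁₂ (z.1, -x₂) + L₂₃ (x₂, z.2)}

variable (h12 : L₁₂ ∈ admissible L₁ L₂) (h23 : L₂₃ ∈ admissible L₂ L₃)
include h12 h23

lemma conv_le (z : M₁ × M₃) (x₂ : M₂) :
    conv L₁₂ L₂₃ z ≤ L₁₂ (z.1, -x₂) + L₂₃ (x₂, z.2) :=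
  csInf_le ⟨0, by rintro t ⟨y, rfl⟩; exact add_nonneg (h12.1 _) (h23.1 _)⟩ ⟨x₂, rfl⟩

lemma conv_nonneg (z : M₁ × M₃) : 0 ≤ conv L₁₂ L₂₃ z :=
  le_csInf ⟨_, 0, rfl⟩ (by rintro t ⟨y, rfl⟩; exact add_nonneg (h12.1 _) (h23.1 _))

lemma conv_exists_lt (z : M₁ × M₃) {ε : ℝ} (hε : 0 < ε) :
    ∃ x₂ : M₂, L₁₂ (z.1, -x₂) + L₂₃ (x₂, z.2) < conv L₁₂ L₂₃ z + ε := by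
  have hne : {t | ∃ x₂ : M₂, t = L₁₂ (z.1, -x₂) + L₂₃ (x₂, z.2)}.Nonempty := ⟨_, 0, rfl⟩
  obtain ⟨t, ⟨x₂, rfl⟩, ht⟩ :=
    exists_lt_of_csInf_lt hne (lt_add_of_pos_right (conv L₁₂ L₂₃ z) hε)
  exact ⟨x₂, ht⟩

lemma conv_zero : conv L₁₂ L₂₃ 0 = 0 := by
  refine le_antisymm ?_ (conv_nonneg h12 h23 0)
  have := conv_le h12 h23 0 0
  have e1 : L₁₂ ((0 : M₁ × M₃).1, -(0 : M₂)) = 0 := by rw [neg_zero]; exact adm_zero h12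
  have e2 : L₂₃ ((0 : M₂), (0 : M₁ × M₃).2) = 0 := adm_zero h23
  linarith

lemma conv_smul_le (c : ℂ) (z : M₁ × M₃) : conv L₁₂ L₂₃ (c • z) ≤ ‖c‖ * conv L₁₂ L₂₃ z := by
  rcases eq_or_ne c 0 with rfl | hc
  · simp only [zero_smul, norm_zero, zero_mul]
    rw [conv_zero h12 h23]
  · refine real_le_of_forall_pos_le_add fun ε hε => ?_
    have hcpos : (0 : ℝ) < ‖c‖ := norm_pos_iff.mpr hc
    obtain ⟨x₂, hx₂⟩ := conv_exists_lt h12 h23 z (div_pos hε hcpos)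
    have h1 : conv L₁₂ L₂₃ (c • z) ≤ L₁₂ ((c • z).1, -(c • x₂)) + L₂₃ (c • x₂, (c • z).2) :=
      conv_le h12 h23 _ _
    have e1 : ((c • z).1, -(c • x₂)) = c • ((z.1 : M₁), -x₂) := by
      simp [Prod.smul_mk, smul_neg]
    have e2 : ((c • x₂ : M₂), (c • z).2) = c • ((x₂ : M₂), z.2) := by
      simp [Prod.smul_mk]
    rw [e1, e2, h12.2.2.1, h23.2.2.1] at h1
    have h3 := mul_le_mul_of_nonneg_left hx₂.le hcpos.le
    rw [mul_add (‖c‖) (conv L₁₂ L₂₃ z) (ε / ‖c‖), mul_div_cancel₀ _ hcpos.ne'] at h3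
    calc conv L₁₂ L₂₃ (c • z) ≤ ‖c‖ * L₁₂ (z.1, -x₂) + ‖c‖ * L₂₃ (x₂, z.2) := h1
      _ = ‖c‖ * (L₁₂ (z.1, -x₂) + L₂₃ (x₂, z.2)) := by ring
      _ ≤ ‖c‖ * conv L₁₂ L₂₃ z + ε := h3

lemma conv_smul (c : ℂ) (z : M₁ × M₃) : conv L₁₂ L₂₃ (c • z) = ‖c‖ * conv L₁₂ L₂₃ z := by
  rcases eq_or_ne c 0 with rfl | hc
  · simp only [zero_smul, norm_zero, zero_mul]
    exact conv_zero h12 h23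
  · refine le_antisymm (conv_smul_le h12 h23 c z) ?_
    have h := conv_smul_le h12 h23 c⁻¹ (c • z)
    rw [smul_smul, inv_mul_cancel₀ hc, one_smul, norm_inv] at h
    calc ‖c‖ * conv L₁₂ L₂₃ z ≤ ‖c‖ * (‖c‖⁻¹ * conv L₁₂ L₂₃ (c • z)) :=
          mul_le_mul_of_nonneg_left h (norm_nonneg c)
      _ = conv L₁₂ L₂₃ (c • z) := by
          rw [← mul_assoc, mul_inv_cancel₀ (norm_pos_iff.mpr hc).ne', one_mul]

lemma conv_admissible : conv L₁₂ L₂₃ ∈ admissible L₁ L₃ := by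
  refine ⟨conv_nonneg h12 h23, ?_, conv_smul h12 h23, ?_, ?_⟩
  · -- subadditivity
    intro z w
    refine real_le_of_forall_pos_le_add fun ε hε => ?_
    obtain ⟨x₂, hx₂⟩ := conv_exists_lt h12 h23 z (half_pos hε)
    obtain ⟨y₂, hy₂⟩ := conv_exists_lt h12 h23 w (half_pos hε)
    have h1 : conv L₁₂ L₂₃ (z + w)
        ≤ L₁₂ ((z + w).1, -(x₂ + y₂)) + L₂₃ (x₂ + y₂, (z + w).2) := conv_le h12 h23 _ _
    have e1 : (((z + w).1 : M₁), -(x₂ + y₂)) = ((z.1, -x₂) : M₁ × M₂) + (w.1, -y₂) := by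
      simp [Prod.mk_add_mk, neg_add, add_comm]
    have e2 : ((x₂ + y₂ : M₂), ((z + w).2 : M₃)) = ((x₂, z.2) : M₂ × M₃) + (y₂, w.2) := by
      simp [Prod.mk_add_mk]
    calc conv L₁₂ L₂₃ (z + w)
        ≤ L₁₂ ((z + w).1, -(x₂ + y₂)) + L₂₃ (x₂ + y₂, (z + w).2) := h1
      _ ≤ (L₁₂ (z.1, -x₂) + L₁₂ (w.1, -y₂)) + (L₂₃ (x₂, z.2) + L₂₃ (y₂, w.2)) := by
          rw [e1, e2]
          exact add_le_add (h12.2.1 _ _) (h23.2.1 _ _)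
      _ ≤ conv L₁₂ L₂₃ z + conv L₁₂ L₂₃ w + ε := by linarith
  · -- left restriction
    intro x
    refine le_antisymm ?_ ?_
    · have := conv_le h12 h23 (x, 0) 0
      have e1 : L₁₂ ((x, (0 : M₃)).1, -(0 : M₂)) = L₁ x := by rw [neg_zero]; exact h12.2.2.2.1 x
      have e2 : L₂₃ ((0 : M₂), (x, (0 : M₃)).2) = 0 := adm_zero h23
      linarith
    · refine le_csInf ⟨_, 0, rfl⟩ ?_
      rintro t ⟨x₂, rfl⟩
      have key : L₁ x ≤ L₁₂ (x, -x₂) + L₁₂ (0, x₂) := by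
        have h := h12.2.1 (x, -x₂) (0, x₂)
        simpa [Prod.mk_add_mk, h12.2.2.2.1] using h
      have h2 : L₁₂ ((0 : M₁), x₂) = L₂₃ (x₂, (0 : M₃)) := by
        rw [h12.2.2.2.2, h23.2.2.2.1]
      simp only [Prod.fst, Prod.snd]
      linarith [key, h2.le, h2.ge]
  · -- right restriction
    intro y
    refine le_antisymm ?_ ?_
    · have := conv_le h12 h23 (0, y) 0
      have e1 : L₁₂ (((0 : M₁), y).1, -(0 : M₂)) = 0 := by rw [neg_zero]; exact adm_zero h12
      have e2 : L₂₃ ((0 : M₂), ((0 : M₁), y).2) = L₃ y := h23.2.2.2.2 y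
      linarith
    · refine le_csInf ⟨_, 0, rfl⟩ ?_
      rintro t ⟨x₂, rfl⟩
      have key : L₃ y ≤ L₂₃ (-x₂, 0) + L₂₃ (x₂, y) := by
        have h := h23.2.1 (-x₂, 0) (x₂, y)
        simpa [Prod.mk_add_mk, h23.2.2.2.2] using h
      have h2 : L₂₃ ((-x₂ : M₂), (0 : M₃)) = L₁₂ ((0 : M₁), -x₂) := by
        have hn : ((-x₂ : M₂), (0 : M₃)) = -((x₂ : M₂), (0 : M₃)) := by simp
        have hn2 : ((0 : M₁), (-x₂ : M₂)) = -((0 : M₁), (x₂ : M₂)) := by simp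
        rw [hn, adm_neg h23, hn2, adm_neg h12, h23.2.2.2.1, h12.2.2.2.2]
      linarith [key, h2.le]

end Conv

end Aux

/-- The dual quantum Gromov–Hausdorff distance satisfies the triangle
inequality: for Lip-von Neumann algebras `M₁`, `M₂`, `M₃`,
`dist_{qGH*}(M₁,M₃) ≤ dist_{qGH*}(M₁,M₂) + dist_{qGH*}(M₂,M₃)`. -/
theorem stmt7 {M₁ M₂ M₃ : Type*}
    [NormedRing M₁] [NormedAlgebra ℂ M₁] [StarRing M₁] [CStarRing M₁] [StarModule ℂ M₁]
    [CompleteSpace M₁]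
    [NormedRing M₂] [NormedAlgebra ℂ M₂] [StarRing M₂] [CStarRing M₂] [StarModule ℂ M₂]
    [CompleteSpace M₂]
    [NormedRing M₃] [NormedAlgebra ℂ M₃] [StarRing M₃] [CStarRing M₃] [StarModule ℂ M₃]
    [CompleteSpace M₃]
    (L₁ : M₁ → ℝ) (L₂ : M₂ → ℝ) (L₃ : M₃ → ℝ)
    (h₁ : IsDualLipNorm L₁) (h₂ : IsDualLipNorm L₂) (h₃ : IsDualLipNorm L₃) :
    distqGH L₁ L₃ ≤ distqGH L₁ L₂ + distqGH L₂ L₃ := by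
  classical
  obtain ⟨C₁, hC₁0, hC₁⟩ := dualLipNorm_entry_bound h₁
  obtain ⟨C₂, hC₂0, hC₂⟩ := dualLipNorm_entry_bound h₂
  obtain ⟨C₃, hC₃0, hC₃⟩ := dualLipNorm_entry_bound h₃
  -- nonemptiness of the various subtypes
  haveI hA1 : Nonempty ↑(embL (N := M₂) '' posUnitBall M₁) :=
    ⟨⟨_, ⟨0, zero_mem_posUnitBall M₁, rfl⟩⟩⟩
  haveI hB2 : Nonempty ↑(embR (M := M₁) '' posUnitBall M₂) :=
    ⟨⟨_, ⟨0, zero_mem_posUnitBall M₂, rfl⟩⟩⟩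
  haveI hA2 : Nonempty ↑(embL (N := M₃) '' posUnitBall M₂) :=
    ⟨⟨_, ⟨0, zero_mem_posUnitBall M₂, rfl⟩⟩⟩
  haveI hB3 : Nonempty ↑(embR (M := M₂) '' posUnitBall M₃) :=
    ⟨⟨_, ⟨0, zero_mem_posUnitBall M₃, rfl⟩⟩⟩
  haveI hA1' : Nonempty ↑(embL (N := M₃) '' posUnitBall M₁) :=
    ⟨⟨_, ⟨0, zero_mem_posUnitBall M₁, rfl⟩⟩⟩
  haveI hB3' : Nonempty ↑(embR (M := M₁) '' posUnitBall M₃) :=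
    ⟨⟨_, ⟨0, zero_mem_posUnitBall M₃, rfl⟩⟩⟩
  -- key step: combining two admissible seminorms
  have key : ∀ L₁₂ ∈ admissible L₁ L₂, ∀ L₂₃ ∈ admissible L₂ L₃,
      distqGH L₁ L₃ ≤
        seminormHausdorffDist (matLift L₁₂) (embL (N := M₂) '' posUnitBall M₁)
          (embR (M := M₁) '' posUnitBall M₂) +
        seminormHausdorffDist (matLift L₂₃) (embL (N := M₃) '' posUnitBall M₂)
          (embR (M := M₂) '' posUnitBall M₃) := by
    intro L₁₂ h12 L₂₃ h23
    set d12 := seminormHausdorffDist (matLift L₁₂) (embL (N := M₂) '' posUnitBall M₁)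
      (embR (M := M₁) '' posUnitBall M₂) with hd12
    set d23 := seminormHausdorffDist (matLift L₂₃) (embL (N := M₃) '' posUnitBall M₂)
      (embR (M := M₂) '' posUnitBall M₃) with hd23
    set L13 := conv L₁₂ L₂₃ with hL13
    have hadm13 := conv_admissible h12 h23
    -- Step 1 : for a in the positive unit ball of M₁, the inf over B2 is at most d12
    have step1 : ∀ a ∈ posUnitBall M₁,
        (⨅ y : ↑(embR (M := M₁) '' posUnitBall M₂), matLift L₁₂ (embL a - (y : Matrix (Fin 2) (Fin 2) (M₁ × M₂)))) ≤ d12 := by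
      intro a ha
      rw [hd12]
      unfold seminormHausdorffDist
      have hbdd : BddAbove (Set.range fun x : ↑(embL (N := M₂) '' posUnitBall M₁) =>
          ⨅ y : ↑(embR (M := M₁) '' posUnitBall M₂),
            matLift L₁₂ ((x : Matrix (Fin 2) (Fin 2) (M₁ × M₂)) -
              (y : Matrix (Fin 2) (Fin 2) (M₁ × M₂)))) := by
        refine ⟨C₁, ?_⟩
        rintro r ⟨⟨x, ⟨a', ha', rfl⟩⟩, rfl⟩
        refine le_trans (ciInf_le ⟨0, ?_⟩
        (⟨embR 0, ⟨0, zero_mem_posUnitBall M₂, rfl⟩⟩ :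
            ↑(embR (M := M₁) '' posUnitBall M₂))) ?_
        · rintro r ⟨y, rfl⟩; exact matLift_nonneg h12.1 _
        · refine matLift_le fun i j => ?_
          rw [embL_sub_embR_apply]
          simp only [Matrix.zero_apply, neg_zero]
          rw [h12.2.2.2.1]
          exact hC₁ a' ha' i j
      exact le_trans (le_ciSup hbdd ⟨embL a, ⟨a, ha, rfl⟩⟩) (le_max_left _ _)
    -- Step 2 : for b in the positive unit ball of M₂, the inf over B3 is at most d23
    have step2 : ∀ b ∈ posUnitBall M₂,
        (⨅ y : ↑(embR (M := M₂) '' posUnitBall M₃), matLift L₂₃ (embL b - (y : Matrix (Fin 2) (Fin 2) (M₂ × M₃)))) ≤ d23 := by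
      intro b hb
      rw [hd23]
      unfold seminormHausdorffDist
      have hbdd : BddAbove (Set.range fun x : ↑(embL (N := M₃) '' posUnitBall M₂) =>
          ⨅ y : ↑(embR (M := M₂) '' posUnitBall M₃),
            matLift L₂₃ ((x : Matrix (Fin 2) (Fin 2) (M₂ × M₃)) -
              (y : Matrix (Fin 2) (Fin 2) (M₂ × M₃)))) := by
        refine ⟨C₂, ?_⟩
        rintro r ⟨⟨x, ⟨b', hb', rfl⟩⟩, rfl⟩
        refine le_trans (ciInf_le ⟨0, ?_⟩
        (⟨embR 0, ⟨0, zero_mem_posUnitBall M₃, rfl⟩⟩ :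
            ↑(embR (M := M₂) '' posUnitBall M₃))) ?_
        · rintro r ⟨y, rfl⟩; exact matLift_nonneg h23.1 _
        · refine matLift_le fun i j => ?_
          rw [embL_sub_embR_apply]
          simp only [Matrix.zero_apply, neg_zero]
          rw [h23.2.2.2.1]
          exact hC₂ b' hb' i j
      exact le_trans (le_ciSup hbdd ⟨embL b, ⟨b, hb, rfl⟩⟩) (le_max_left _ _)
    -- Step 3 : for c in the positive unit ball of M₃, the inf over A2 is at most d23
    have step3 : ∀ c ∈ posUnitBall M₃,
        (⨅ x : ↑(embL (N := M₃) '' posUnitBall M₂), matLift L₂₃ ((x : Matrix (Fin 2) (Fin 2) (M₂ × M₃)) - embR c)) ≤ d23 := by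
      intro c hc
      rw [hd23]
      unfold seminormHausdorffDist
      have hbdd : BddAbove (Set.range fun y : ↑(embR (M := M₂) '' posUnitBall M₃) =>
          ⨅ x : ↑(embL (N := M₃) '' posUnitBall M₂),
            matLift L₂₃ ((x : Matrix (Fin 2) (Fin 2) (M₂ × M₃)) -
              (y : Matrix (Fin 2) (Fin 2) (M₂ × M₃)))) := by
        refine ⟨C₃, ?_⟩
        rintro r ⟨⟨y, ⟨c', hc', rfl⟩⟩, rfl⟩
        refine le_trans (ciInf_le ⟨0, ?_⟩
        (⟨embL 0, ⟨0, zero_mem_posUnitBall M₂, rfl⟩⟩ :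
            ↑(embL (N := M₃) '' posUnitBall M₂))) ?_
        · rintro r ⟨x, rfl⟩; exact matLift_nonneg h23.1 _
        · refine matLift_le fun i j => ?_
          rw [embL_sub_embR_apply]
          simp only [Matrix.zero_apply]
          have hn : ((0 : M₂), -c' i j) = -((0 : M₂), c' i j) := by simp
          rw [hn, adm_neg h23, h23.2.2.2.2]
          exact hC₃ c' hc' i j
      exact le_trans (le_ciSup hbdd ⟨embR c, ⟨c, hc, rfl⟩⟩) (le_max_right _ _)
    -- Step 4 : for b in the positive unit ball of M₂, the inf over A1 is at most d12
    have step4 : ∀ b ∈ posUnitBall M₂,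
        (⨅ x : ↑(embL (N := M₂) '' posUnitBall M₁), matLift L₁₂ ((x : Matrix (Fin 2) (Fin 2) (M₁ × M₂)) - embR b)) ≤ d12 := by
      intro b hb
      rw [hd12]
      unfold seminormHausdorffDist
      have hbdd : BddAbove (Set.range fun y : ↑(embR (M := M₁) '' posUnitBall M₂) =>
          ⨅ x : ↑(embL (N := M₂) '' posUnitBall M₁),
            matLift L₁₂ ((x : Matrix (Fin 2) (Fin 2) (M₁ × M₂)) -
              (y : Matrix (Fin 2) (Fin 2) (M₁ × M₂)))) := by
        refine ⟨C₂, ?_⟩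
        rintro r ⟨⟨y, ⟨b', hb', rfl⟩⟩, rfl⟩
        refine le_trans (ciInf_le ⟨0, ?_⟩
        (⟨embL 0, ⟨0, zero_mem_posUnitBall M₁, rfl⟩⟩ :
            ↑(embL (N := M₂) '' posUnitBall M₁))) ?_
        · rintro r ⟨x, rfl⟩; exact matLift_nonneg h12.1 _
        · refine matLift_le fun i j => ?_
          rw [embL_sub_embR_apply]
          simp only [Matrix.zero_apply]
          have hn : ((0 : M₁), -b' i j) = -((0 : M₁), b' i j) := by simp
          rw [hn, adm_neg h12, h12.2.2.2.2]
          exact hC₂ b' hb' i j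
      exact le_trans (le_ciSup hbdd ⟨embR b, ⟨b, hb, rfl⟩⟩) (le_max_right _ _)
    -- Extractions
    have ex1 : ∀ a ∈ posUnitBall M₁, ∀ ε : ℝ, 0 < ε →
        ∃ b ∈ posUnitBall M₂, matLift L₁₂ (embL a - embR b) < d12 + ε := by
      intro a ha ε hε
      have h := lt_of_le_of_lt (step1 a ha) (lt_add_of_pos_right _ hε)
      obtain ⟨⟨y, ⟨b, hb, rfl⟩⟩, hy⟩ := exists_lt_of_ciInf_lt h
      exact ⟨b, hb, hy⟩
    have ex2 : ∀ b ∈ posUnitBall M₂, ∀ ε : ℝ, 0 < ε →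
        ∃ c ∈ posUnitBall M₃, matLift L₂₃ (embL b - embR c) < d23 + ε := by
      intro b hb ε hε
      have h := lt_of_le_of_lt (step2 b hb) (lt_add_of_pos_right _ hε)
      obtain ⟨⟨y, ⟨c, hc, rfl⟩⟩, hy⟩ := exists_lt_of_ciInf_lt h
      exact ⟨c, hc, hy⟩
    have ex3 : ∀ c ∈ posUnitBall M₃, ∀ ε : ℝ, 0 < ε →
        ∃ b ∈ posUnitBall M₂, matLift L₂₃ (embL b - embR c) < d23 + ε := by
      intro c hc ε hε
      have h := lt_of_le_of_lt (step3 c hc) (lt_add_of_pos_right _ hε)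
      obtain ⟨⟨x, ⟨b, hb, rfl⟩⟩, hx⟩ := exists_lt_of_ciInf_lt h
      exact ⟨b, hb, hx⟩
    have ex4 : ∀ b ∈ posUnitBall M₂, ∀ ε : ℝ, 0 < ε →
        ∃ a ∈ posUnitBall M₁, matLift L₁₂ (embL a - embR b) < d12 + ε := by
      intro b hb ε hε
      have h := lt_of_le_of_lt (step4 b hb) (lt_add_of_pos_right _ hε)
      obtain ⟨⟨x, ⟨a, ha, rfl⟩⟩, hx⟩ := exists_lt_of_ciInf_lt h
      exact ⟨a, ha, hx⟩
    -- Combination inequality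
    have comb : ∀ (a : Matrix (Fin 2) (Fin 2) M₁) (b : Matrix (Fin 2) (Fin 2) M₂)
        (c : Matrix (Fin 2) (Fin 2) M₃),
        matLift L13 (embL a - embR c) ≤
          matLift L₁₂ (embL a - embR b) + matLift L₂₃ (embL b - embR c) := by
      intro a b c
      refine matLift_le fun i j => ?_
      rw [embL_sub_embR_apply]
      have h1 : L13 (a i j, -(c i j)) ≤ L₁₂ (a i j, -(b i j)) + L₂₃ (b i j, -(c i j)) :=
        conv_le h12 h23 (a i j, -(c i j)) (b i j)
      have e1 : (a i j, -(b i j)) = (embL (N := M₂) a - embR (M := M₁) b) i j :=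
        (embL_sub_embR_apply a b i j).symm
      have e2 : (b i j, -(c i j)) = (embL (N := M₃) b - embR (M := M₂) c) i j :=
        (embL_sub_embR_apply b c i j).symm
      calc L13 (a i j, -(c i j)) ≤ L₁₂ (a i j, -(b i j)) + L₂₃ (b i j, -(c i j)) := h1
        _ ≤ matLift L₁₂ (embL a - embR b) + matLift L₂₃ (embL b - embR c) := by
            rw [e1, e2]
            exact add_le_add (le_matLift _ _ i j) (le_matLift _ _ i j)
    -- The Hausdorff distance bound
    have tgt1 : (⨆ x : ↑(embL (N := M₃) '' posUnitBall M₁),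
        ⨅ y : ↑(embR (M := M₁) '' posUnitBall M₃), matLift L13 ((x : Matrix (Fin 2) (Fin 2) (M₁ × M₃)) - (y : Matrix (Fin 2) (Fin 2) (M₁ × M₃)))) ≤ d12 + d23 := by
      refine ciSup_le ?_
      rintro ⟨x, ⟨a, ha, rfl⟩⟩
      refine real_le_of_forall_pos_le_add fun ε hε => ?_
      obtain ⟨b, hb, hab⟩ := ex1 a ha (ε / 2) (by linarith)
      obtain ⟨c, hc, hbc⟩ := ex2 b hb (ε / 2) (by linarith)
      refine le_trans (ciInf_le ⟨0, ?_⟩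
        (⟨embR c, ⟨c, hc, rfl⟩⟩ : ↑(embR (M := M₁) '' posUnitBall M₃))) ?_
      · rintro r ⟨y, rfl⟩; exact matLift_nonneg hadm13.1 _
      · calc matLift L13 (embL a - embR c)
            ≤ matLift L₁₂ (embL a - embR b) + matLift L₂₃ (embL b - embR c) := comb a b c
          _ ≤ d12 + ε / 2 + (d23 + ε / 2) := add_le_add hab.le hbc.le
          _ = d12 + d23 + ε := by ring
    have tgt2 : (⨆ y : ↑(embR (M := M₁) '' posUnitBall M₃),
        ⨅ x : ↑(embL (N := M₃) '' posUnitBall M₁), matLift L13 ((x : Matrix (Fin 2) (Fin 2) (M₁ × M₃)) - (y : Matrix (Fin 2) (Fin 2) (M₁ × M₃)))) ≤ d12 + d23 := by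
      refine ciSup_le ?_
      rintro ⟨y, ⟨c, hc, rfl⟩⟩
      refine real_le_of_forall_pos_le_add fun ε hε => ?_
      obtain ⟨b, hb, hbc⟩ := ex3 c hc (ε / 2) (by linarith)
      obtain ⟨a, ha, hab⟩ := ex4 b hb (ε / 2) (by linarith)
      refine le_trans (ciInf_le ⟨0, ?_⟩
        (⟨embL a, ⟨a, ha, rfl⟩⟩ : ↑(embL (N := M₃) '' posUnitBall M₁))) ?_
      · rintro r ⟨x, rfl⟩; exact matLift_nonneg hadm13.1 _
      · calc matLift L13 (embL a - embR c)
            ≤ matLift L₁₂ (embL a - embR b) + matLift L₂₃ (embL b - embR c) := comb a b c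
          _ ≤ d12 + ε / 2 + (d23 + ε / 2) := add_le_add hab.le hbc.le
          _ = d12 + d23 + ε := by ring
    have hH : seminormHausdorffDist (matLift L13) (embL (N := M₃) '' posUnitBall M₁)
        (embR (M := M₁) '' posUnitBall M₃) ≤ d12 + d23 := max_le tgt1 tgt2
    refine le_trans (csInf_le ?_ ?_) hH
    · refine ⟨0, ?_⟩
      rintro r ⟨L, hL, rfl⟩
      refine le_max_of_le_left (Real.iSup_nonneg fun x => Real.iInf_nonneg fun y => ?_)
      exact matLift_nonneg hL.1 _
    · exact ⟨L13, hadm13, rfl⟩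
  -- assembling : triangle inequality for the infima
  have bdd12 : ∀ d ∈ {d | ∃ L ∈ admissible L₁ L₂,
      d = seminormHausdorffDist (matLift L) (embL (N := M₂) '' posUnitBall M₁)
        (embR (M := M₁) '' posUnitBall M₂)}, (0:ℝ) ≤ d := by
    rintro r ⟨L, hL, rfl⟩
    refine le_max_of_le_left (Real.iSup_nonneg fun x => Real.iInf_nonneg fun y => ?_)
    exact matLift_nonneg hL.1 _
  have hsum12 : (fun z : M₁ × M₂ => L₁ z.1 + L₂ z.2) ∈ admissible L₁ L₂ := by
    refine ⟨fun z => add_nonneg (h₁.1 _) (h₂.1 _), fun z w => ?_, fun c z => ?_, fun x => ?_,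
      fun y => ?_⟩
    · have u1 := h₁.2.1 z.1 w.1
      have u2 := h₂.2.1 z.2 w.2
      simp only [Prod.fst_add, Prod.snd_add]
      linarith
    · have u1 := h₁.2.2.1 c z.1
      have u2 := h₂.2.2.1 c z.2
      simp only [Prod.smul_fst, Prod.smul_snd]
      rw [u1, u2]; ring
    · have : L₂ 0 = 0 := by simpa using h₂.2.2.1 0 0
      simp [this]
    · have : L₁ 0 = 0 := by simpa using h₁.2.2.1 0 0
      simp [this]
  have hsum23 : (fun z : M₂ × M₃ => L₂ z.1 + L₃ z.2) ∈ admissible L₂ L₃ := by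
    refine ⟨fun z => add_nonneg (h₂.1 _) (h₃.1 _), fun z w => ?_, fun c z => ?_, fun x => ?_,
      fun y => ?_⟩
    · have u1 := h₂.2.1 z.1 w.1
      have u2 := h₃.2.1 z.2 w.2
      simp only [Prod.fst_add, Prod.snd_add]
      linarith
    · have u1 := h₂.2.2.1 c z.1
      have u2 := h₃.2.2.1 c z.2
      simp only [Prod.smul_fst, Prod.smul_snd]
      rw [u1, u2]; ring
    · have : L₃ 0 = 0 := by simpa using h₃.2.2.1 0 0
      simp [this]
    · have : L₂ 0 = 0 := by simpa using h₂.2.2.1 0 0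
      simp [this]
  have ne12 : {d | ∃ L ∈ admissible L₁ L₂,
      d = seminormHausdorffDist (matLift L) (embL (N := M₂) '' posUnitBall M₁)
        (embR (M := M₁) '' posUnitBall M₂)}.Nonempty := ⟨_, _, hsum12, rfl⟩
  have ne23 : {d | ∃ L ∈ admissible L₂ L₃,
      d = seminormHausdorffDist (matLift L) (embL (N := M₃) '' posUnitBall M₂)
        (embR (M := M₂) '' posUnitBall M₃)}.Nonempty := ⟨_, _, hsum23, rfl⟩
  have key' : ∀ d12 ∈ {d | ∃ L ∈ admissible L₁ L₂,
      d = seminormHausdorffDist (matLift L) (embL (N := M₂) '' posUnitBall M₁)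
        (embR (M := M₁) '' posUnitBall M₂)},
      ∀ d23 ∈ {d | ∃ L ∈ admissible L₂ L₃,
      d = seminormHausdorffDist (matLift L) (embL (N := M₃) '' posUnitBall M₂)
        (embR (M := M₂) '' posUnitBall M₃)},
      distqGH L₁ L₃ ≤ d12 + d23 := by
    rintro r ⟨L₁₂, h12, rfl⟩ r' ⟨L₂₃, h23, rfl⟩
    exact key L₁₂ h12 L₂₃ h23
  have step : distqGH L₁ L₃ - distqGH L₂ L₃ ≤ distqGH L₁ L₂ := by
    rw [show distqGH L₁ L₂ = sInf _ from rfl]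
    refine le_csInf ne12 fun d12 hd12 => ?_
    rw [sub_le_iff_le_add]
    rw [show distqGH L₂ L₃ = sInf _ from rfl]
    have : distqGH L₁ L₃ - d12 ≤ sInf {d | ∃ L ∈ admissible L₂ L₃,
        d = seminormHausdorffDist (matLift L) (embL (N := M₃) '' posUnitBall M₂)
          (embR (M := M₂) '' posUnitBall M₃)} := by
      refine le_csInf ne23 fun d23 hd23 => ?_
      rw [sub_le_iff_le_add]
      have := key' d12 hd12 d23 hd23
      linarith
    linarith
  linarith
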